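/- For any ideal I in a polynomial ring over a field K and any term order σ, the Hilbert function of R/I equals the Hilbert function of R/in(I), where in(I) is the initial ideal of I with respect to σ. -/

import Mathlib

open MvPolynomial

variable {σ K : Type*} [Field K]

/-- The leading exponent (multidegree) of a polynomial with respect to a monomial order. -/
noncomputable def leadExp (m : MonomialOrder σ) (p : MvPolynomial σ K) : σ →₀ ℕ :=
  m.toSyn.symm (p.support.sup fun e => m.toSyn e)

/-- The initial ideal of `I` with respect to a monomial order: the ideal generated by the
leading monomials of the nonzero elements of `I`. -/
noncomputable def initialIdeal (m : MonomialOrder σ) (I : Ideal (MvPolynomial σ K)) :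
    Ideal (MvPolynomial σ K) :=
  Ideal.span ((fun p => (MvPolynomial.monomial (leadExp m p) (1 : K))) ''
    {p | p ∈ I ∧ p ≠ 0})

/-- An ideal of a polynomial ring is homogeneous (w.r.t. the standard grading). -/
def IsHomogeneousIdeal {n : ℕ} (I : Ideal (MvPolynomial (Fin n) K)) : Prop :=
  ∀ p ∈ I, ∀ d : ℕ, MvPolynomial.homogeneousComponent d p ∈ I

/-- The Hilbert function of `R/I` in degree `d`. -/
noncomputable def quotHilbert {n : ℕ} (I : Ideal (MvPolynomial (Fin n) K)) (d : ℕ) : ℕ :=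
  Module.finrank K
    ((MvPolynomial.homogeneousSubmodule (Fin n) K d).map
      (Ideal.Quotient.mkₐ K I).toLinearMap)


namespace LeadAux

open scoped Classical

variable (m : MonomialOrder σ)

lemma toSyn_leadExp (p : MvPolynomial σ K) :
    m.toSyn (leadExp m p) = p.support.sup fun e => m.toSyn e := by
  simp [leadExp]

lemma le_leadExp {p : MvPolynomial σ K} {a : σ →₀ ℕ} (ha : a ∈ p.support) :
    m.toSyn a ≤ m.toSyn (leadExp m p) := by
  rw [toSyn_leadExp]; exact Finset.le_sup ha

lemma leadExp_mem_support {p : MvPolynomial σ K} (hp : p ≠ 0) :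
    leadExp m p ∈ p.support := by
  obtain ⟨b, hb, hs⟩ := Finset.exists_mem_eq_sup p.support
    (Finset.nonempty_iff_ne_empty.mpr (mt MvPolynomial.support_eq_empty.mp hp)) fun e => m.toSyn e
  have : leadExp m p = b := by
    apply m.toSyn.injective
    rw [toSyn_leadExp, hs]
  rwa [this]

lemma coeff_leadExp_ne_zero {p : MvPolynomial σ K} (hp : p ≠ 0) :
    p.coeff (leadExp m p) ≠ 0 :=
  mem_support_iff.mp (leadExp_mem_support m hp)

lemma coeff_eq_zero_of_lt {p : MvPolynomial σ K} {a : σ →₀ ℕ}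
    (h : m.toSyn (leadExp m p) < m.toSyn a) : p.coeff a = 0 := by
  by_contra hc
  exact absurd (le_leadExp m (mem_support_iff.mpr hc)) (not_le_of_gt h)

lemma leadExp_eq_of {p : MvPolynomial σ K} {a : σ →₀ ℕ} (ha : a ∈ p.support)
    (hmax : ∀ b ∈ p.support, m.toSyn b ≤ m.toSyn a) : leadExp m p = a := by
  apply m.toSyn.injective
  apply le_antisymm
  · rw [toSyn_leadExp]; exact Finset.sup_le hmax
  · exact le_leadExp m ha

lemma leadExp_monomial (a : σ →₀ ℕ) : leadExp m (monomial a (1 : K)) = a := by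
  apply leadExp_eq_of
  · rw [mem_support_iff, coeff_monomial, if_pos rfl]; exact one_ne_zero
  · intro b hb
    rw [mem_support_iff, coeff_monomial] at hb
    rcases eq_or_ne a b with rfl | h
    · exact le_rfl
    · simp [h] at hb

lemma leadExp_monomial_mul {p : MvPolynomial σ K} (hp : p ≠ 0) (c : σ →₀ ℕ) :
    leadExp m (monomial c (1 : K) * p) = c + leadExp m p := by
  apply leadExp_eq_of
  · rw [mem_support_iff, coeff_monomial_mul, one_mul]
    exact coeff_leadExp_ne_zero m hp
  · intro b hb
    rw [mem_support_iff, coeff_monomial_mul'] at hb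
    by_cases hcb : c ≤ b
    · rw [if_pos hcb, one_mul] at hb
      have h1 : m.toSyn (b - c) ≤ m.toSyn (leadExp m p) :=
        le_leadExp m (mem_support_iff.mpr hb)
      have : b = c + (b - c) := by
        rw [add_comm, tsub_add_cancel_of_le hcb]
      rw [this, map_add, map_add]
      exact add_le_add le_rfl h1
    · rw [if_neg hcb] at hb; exact absurd rfl hb

lemma leadExp_smul {p : MvPolynomial σ K} {c : K} (hc : c ≠ 0) :
    leadExp m (c • p) = leadExp m p := by
  unfold leadExp
  congr 1
  rw [MvPolynomial.support_smul_eq hc]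

end LeadAux

namespace LeadAux

open scoped Classical

variable (m : MonomialOrder σ)

/-- The set of leading exponents of nonzero elements of a submodule. -/
def leadSet (V : Submodule K (MvPolynomial σ K)) : Set (σ →₀ ℕ) :=
  leadExp m '' {p | p ∈ V ∧ p ≠ 0}

variable (V : Submodule K (MvPolynomial σ K))

/-- A representative with given lead exponent, normalized to lead coefficient 1. -/
noncomputable def rep (a : leadSet m V) : MvPolynomial σ K :=
  (a.2.choose.coeff a.1)⁻¹ • a.2.choose

lemma rep_spec (a : leadSet m V) :
    rep m V a ∈ V ∧ rep m V a ≠ 0 ∧ leadExp m (rep m V a) = a.1 ∧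
      (rep m V a).coeff a.1 = 1 := by
  obtain ⟨⟨hmem, hne⟩, hlead⟩ := a.2.choose_spec
  have hc : a.2.choose.coeff a.1 ≠ 0 := by
    have := coeff_leadExp_ne_zero m hne
    rwa [hlead] at this
  refine ⟨V.smul_mem _ hmem, ?_, ?_, ?_⟩
  · simp only [rep, ne_eq, smul_eq_zero, inv_eq_zero, not_or]
    exact ⟨hc, hne⟩
  · rw [rep, leadExp_smul m (inv_ne_zero hc), hlead]
  · rw [rep, MvPolynomial.coeff_smul, smul_eq_mul, inv_mul_cancel₀ hc]

lemma coeff_rep_eq_zero_of_lt {a b : leadSet m V} (h : m.toSyn b.1 < m.toSyn a.1) :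
    (rep m V b).coeff a.1 = 0 := by
  apply coeff_eq_zero_of_lt
  rwa [(rep_spec m V b).2.2.1]

lemma linearIndependent_rep : LinearIndependent K (rep m V) := by
  rw [linearIndependent_iff']
  intro s g hsum
  by_contra hex
  push_neg at hex
  obtain ⟨i0, hi0s, hi0⟩ := hex
  set t := s.filter (fun i => g i ≠ 0) with ht
  have htne : t.Nonempty := ⟨i0, Finset.mem_filter.mpr ⟨hi0s, hi0⟩⟩
  obtain ⟨a, hat, hamax⟩ := Finset.exists_max_image t (fun i => m.toSyn i.1) htne
  obtain ⟨has, hga⟩ := Finset.mem_filter.mp hat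
  apply hga
  have := congrArg (fun p => MvPolynomial.coeff a.1 p) hsum
  simp only [MvPolynomial.coeff_sum, MvPolynomial.coeff_smul, MvPolynomial.coeff_zero,
    smul_eq_mul] at this
  rw [Finset.sum_eq_single a] at this
  · rwa [(rep_spec m V a).2.2.2, mul_one] at this
  · intro b hbs hba
    by_cases hgb : g b = 0
    · rw [hgb, zero_mul]
    · have hbt : b ∈ t := Finset.mem_filter.mpr ⟨hbs, hgb⟩
      have hlt : m.toSyn b.1 < m.toSyn a.1 := by
        apply lt_of_le_of_ne (hamax b hbt)
        intro hEq
        exact hba (Subtype.ext (m.toSyn.injective hEq))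
      rw [coeff_rep_eq_zero_of_lt m V hlt, mul_zero]
  · intro h; exact absurd has h

lemma mem_span_rep : ∀ q ∈ V, q ∈ Submodule.span K (Set.range (rep m V)) := by
  have H : ∀ s : m.syn, ∀ q ∈ V, m.toSyn (leadExp m q) = s →
      q ∈ Submodule.span K (Set.range (rep m V)) := by
    intro s
    induction s using WellFoundedLT.induction with
    | ind s IH =>
      intro q hqV hqs
      rcases eq_or_ne q 0 with rfl | hq0
      · exact Submodule.zero_mem _
      · set a : σ →₀ ℕ := leadExp m q with ha
        have haS : a ∈ leadSet m V := ⟨q, ⟨hqV, hq0⟩, rfl⟩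
        set aa : leadSet m V := ⟨a, haS⟩
        set r : MvPolynomial σ K := q - q.coeff a • rep m V aa with hr
        have hrV : r ∈ V := V.sub_mem hqV (V.smul_mem _ (rep_spec m V aa).1)
        have hcoeffr : ∀ b : σ →₀ ℕ, m.toSyn a ≤ m.toSyn b → r.coeff b = 0 := by
          intro b hb
          rcases lt_or_eq_of_le hb with hlt | hEq
          · rw [hr, MvPolynomial.coeff_sub, MvPolynomial.coeff_smul,
              coeff_eq_zero_of_lt m hlt, coeff_eq_zero_of_lt m (p := rep m V aa) ?_]
            · simp
            · rwa [(rep_spec m V aa).2.2.1]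
          · have : b = a := m.toSyn.injective hEq.symm
            rw [this, hr, MvPolynomial.coeff_sub, MvPolynomial.coeff_smul,
              (rep_spec m V aa).2.2.2, smul_eq_mul, mul_one, sub_self]
        have hmem_a : rep m V aa ∈ Submodule.span K (Set.range (rep m V)) :=
          Submodule.subset_span ⟨aa, rfl⟩
        have hqr : q = r + q.coeff a • rep m V aa := by rw [hr]; ring
        rcases eq_or_ne r 0 with hr0 | hr0
        · rw [hqr, hr0, zero_add]
          exact Submodule.smul_mem _ _ hmem_a
        · have hlt : m.toSyn (leadExp m r) < s := by
            rw [← hqs]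
            rcases lt_or_ge (m.toSyn (leadExp m r)) (m.toSyn a) with h | h
            · exact h
            · exact absurd (hcoeffr _ h) (coeff_leadExp_ne_zero m hr0)
          have := IH _ hlt r hrV rfl
          rw [hqr]
          exact Submodule.add_mem _ this (Submodule.smul_mem _ _ hmem_a)
  intro q hq
  exact H _ q hq rfl

/-- The representatives, as elements of `V`. -/
noncomputable def repV (a : leadSet m V) : V := ⟨rep m V a, (rep_spec m V a).1⟩

/-- A basis of `V` indexed by its set of leading exponents. -/
noncomputable def leadBasis : Module.Basis (leadSet m V) K V := by
  apply Module.Basis.mk (v := repV m V)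
  · apply LinearIndependent.of_comp V.subtype
    exact linearIndependent_rep m V
  · rintro ⟨x, hx⟩ -
    have h1 : x ∈ Submodule.span K (Set.range (rep m V)) := mem_span_rep m V x hx
    have h2 : Set.range (rep m V) = V.subtype '' Set.range (repV m V) := by
      rw [← Set.range_comp]; rfl
    rw [h2, ← Submodule.map_span] at h1
    obtain ⟨y, hy, hyx⟩ := h1
    have : (⟨x, hx⟩ : V) = y := Subtype.ext hyx.symm
    rw [this]
    exact hy

lemma finrank_eq_of_leadSet_eq (W : Submodule K (MvPolynomial σ K))
    (h : leadSet m V = leadSet m W) :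
    Module.finrank K V = Module.finrank K W :=
  LinearEquiv.finrank_eq ((leadBasis m V).equiv (leadBasis m W) (Equiv.setCongr h))

end LeadAux

namespace LeadAux

variable (m : MonomialOrder σ)

lemma degree_mem_support {p : MvPolynomial σ K} {e : ℕ} (hp : p.IsHomogeneous e)
    {a : σ →₀ ℕ} (ha : a ∈ p.support) : a.degree = e := by
  by_contra h
  exact mem_support_iff.mp ha (hp.coeff_eq_zero h)

lemma leadSet_initial {n : ℕ} (m : MonomialOrder (Fin n))
    (I : Ideal (MvPolynomial (Fin n) K)) (hI : IsHomogeneousIdeal I) (d : ℕ) :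
    leadSet m ((initialIdeal m I).restrictScalars K ⊓ homogeneousSubmodule (Fin n) K d)
      = leadSet m (I.restrictScalars K ⊓ homogeneousSubmodule (Fin n) K d) := by
  have hspan : initialIdeal m I
      = Ideal.span ((fun s => MvPolynomial.monomial s (1 : K)) ''
          (leadExp m '' {p | p ∈ I ∧ p ≠ 0})) := by
    rw [initialIdeal, Set.image_image]
  apply Set.eq_of_subset_of_subset
  · -- every lead exponent of the initial ideal in degree d comes from I in degree d
    rintro a ⟨q, ⟨hqmem, hq0⟩, rfl⟩
    rw [Submodule.mem_inf] at hqmem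
    obtain ⟨hqinit, hqhom⟩ := hqmem
    rw [Submodule.restrictScalars_mem, hspan] at hqinit
    rw [mem_homogeneousSubmodule] at hqhom
    set a := leadExp m q with ha
    have hasup : a ∈ q.support := leadExp_mem_support m hq0
    obtain ⟨b, ⟨p, ⟨hpI, hp0⟩, rfl⟩, hba⟩ :=
      mem_ideal_span_monomial_image.mp hqinit a hasup
    set b := leadExp m p with hb
    have hadeg : a.degree = d := degree_mem_support hqhom hasup
    -- homogeneous component of p of degree b.degree
    set e := b.degree with he
    set p' := MvPolynomial.homogeneousComponent e p with hp'
    have hp'I : p' ∈ I := hI p hpI e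
    have hp'coeff : p'.coeff b = p.coeff b := by
      rw [hp', coeff_homogeneousComponent, if_pos rfl]
    have hpb : p.coeff b ≠ 0 := coeff_leadExp_ne_zero m hp0
    have hp'0 : p' ≠ 0 := fun h => by
      rw [h, MvPolynomial.coeff_zero] at hp'coeff; exact hpb hp'coeff.symm
    have hp'supp : p'.support ⊆ p.support := by
      intro x hx
      rw [mem_support_iff] at hx ⊢
      intro h
      apply hx
      rw [hp', coeff_homogeneousComponent]
      split <;> simp [h]
    have hp'lead : leadExp m p' = b := by
      apply leadExp_eq_of
      · rw [mem_support_iff, hp'coeff]; exact hpb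
      · intro x hx
        exact le_leadExp m (hp'supp hx)
    -- the witness
    set q' := MvPolynomial.monomial (a - b) (1 : K) * p' with hq'
    have hq'I : q' ∈ I := I.mul_mem_left _ hp'I
    have hq'lead : leadExp m q' = a := by
      rw [hq', leadExp_monomial_mul m hp'0, hp'lead, tsub_add_cancel_of_le hba]
    have hq'0 : q' ≠ 0 := by
      intro h
      have hc : q'.coeff ((a - b) + b) = (1 : K) * p'.coeff b := by
        rw [hq', MvPolynomial.coeff_monomial_mul]
      rw [h, MvPolynomial.coeff_zero, one_mul, hp'coeff] at hc
      exact hpb hc.symm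
    have hq'hom : q'.IsHomogeneous d := by
      have h1 : (MvPolynomial.monomial (a - b) (1 : K)).IsHomogeneous ((a - b).degree) :=
        isHomogeneous_monomial _ rfl
      have h2 : p'.IsHomogeneous e := homogeneousComponent_isHomogeneous e p
      have h3 : q'.IsHomogeneous ((a - b).degree + e) := h1.mul h2
      have h4 : (a - b).degree + e = d := by
        rw [he, Finsupp.degree_eq_weight_one, ← map_add, tsub_add_cancel_of_le hba,
          ← Finsupp.degree_eq_weight_one, hadeg]
      rwa [h4] at h3
    exact ⟨q', ⟨Submodule.mem_inf.mpr ⟨hq'I, hq'hom⟩, hq'0⟩, hq'lead⟩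
  · rintro a ⟨p, ⟨hpmem, hp0⟩, rfl⟩
    rw [Submodule.mem_inf, Submodule.restrictScalars_mem, mem_homogeneousSubmodule] at hpmem
    obtain ⟨hpI, hphom⟩ := hpmem
    refine ⟨MvPolynomial.monomial (leadExp m p) (1 : K), ⟨Submodule.mem_inf.mpr ⟨?_, ?_⟩, ?_⟩,
      leadExp_monomial m _⟩
    · rw [Submodule.restrictScalars_mem]
      exact Ideal.subset_span ⟨p, ⟨hpI, hp0⟩, rfl⟩
    · rw [mem_homogeneousSubmodule]
      exact isHomogeneous_monomial _ (degree_mem_support hphom (leadExp_mem_support m hp0))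
    · simp [MvPolynomial.monomial_eq_zero]

end LeadAux

namespace LeadAux

instance instFDhomog {n d : ℕ} :
    FiniteDimensional K (homogeneousSubmodule (Fin n) K d) := by
  apply Submodule.finiteDimensional_of_le (S₂ := restrictTotalDegree (Fin n) K d)
  intro p hp
  rw [mem_restrictTotalDegree]
  exact ((mem_homogeneousSubmodule _ _).mp hp).totalDegree_le

lemma quotHilbert_eq {n : ℕ} (J : Ideal (MvPolynomial (Fin n) K)) (d : ℕ) :
    quotHilbert J d = Module.finrank K (homogeneousSubmodule (Fin n) K d)
      - Module.finrank K (Submodule.restrictScalars K J ⊓ homogeneousSubmodule (Fin n) K d :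
          Submodule K (MvPolynomial (Fin n) K)) := by
  classical
  set S := homogeneousSubmodule (Fin n) K d with hS
  set f := (Ideal.Quotient.mkₐ K J).toLinearMap with hf
  set g := f ∘ₗ S.subtype with hg
  have h1 : S.map f = LinearMap.range g := by
    rw [hg, LinearMap.range_comp, Submodule.range_subtype]
  have hker : LinearMap.ker f = Submodule.restrictScalars K J := by
    ext x
    simp only [LinearMap.mem_ker, hf, AlgHom.toLinearMap_apply, Ideal.Quotient.mkₐ_eq_mk,
      Submodule.restrictScalars_mem]
    exact Ideal.Quotient.eq_zero_iff_mem
  have h2 : LinearMap.ker g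
      = Submodule.comap S.subtype (Submodule.restrictScalars K J ⊓ S) := by
    rw [hg, LinearMap.ker_comp, hker]
    ext ⟨x, hx⟩
    simp [hx]
  have h3 : Module.finrank K (LinearMap.ker g)
      = Module.finrank K (Submodule.restrictScalars K J ⊓ S : Submodule K _) := by
    rw [h2]
    exact LinearEquiv.finrank_eq (Submodule.comapSubtypeEquivOfLe inf_le_right)
  have h4 := LinearMap.finrank_range_add_finrank_ker g
  have h5 : quotHilbert J d = Module.finrank K (LinearMap.range g) := by
    rw [quotHilbert, ← h1]
  omega

end LeadAux

/-- For a homogeneous ideal `I` of `R = K[x_0,…,x_n]` and any term order,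
the Hilbert function of `R/I` equals that of `R/in(I)`. -/
theorem hilbert_initialIdeal {n : ℕ} (m : MonomialOrder (Fin n))
    (I : Ideal (MvPolynomial (Fin n) K)) (hI : IsHomogeneousIdeal I) :
    ∀ d : ℕ, quotHilbert I d = quotHilbert (initialIdeal m I) d := by
  intro d
  rw [LeadAux.quotHilbert_eq, LeadAux.quotHilbert_eq,
    LeadAux.finrank_eq_of_leadSet_eq m _ _ (LeadAux.leadSet_initial m I hI d)]
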